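/- Let m ≥ 1 be a natural number and let x : Fin m → ℝ be real numbers with x i > -1 for every i, and suppose ∑ i, x i = L where L > 0. Then ∑ i, (x i)^2 / (1 + x i) = L^2 / (m + L) if and only if x i = L / m for every i. -/

import Mathlib

/-- Lemma 2.4 (equality case): under the constraints `x i > -1` and `∑ i, x i = L > 0`,
equality `∑ i, (x i)^2 / (1 + x i) = L^2 / (m + L)` holds iff all `x i = L / m`. -/
theorem sum_sq_div_one_add_eq_iff (m : ℕ) (hm : 1 ≤ m) (x : Fin m → ℝ)
    (hx : ∀ i, x i > -1) (L : ℝ) (hL : L > 0) (hsum : ∑ i, x i = L) :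
    ∑ i, (x i) ^ 2 / (1 + x i) = L ^ 2 / (m + L) ↔ ∀ i, x i = L / m := by
  have hm0 : (0:ℝ) < m := by exact_mod_cast hm
  set c : ℝ := L / m with hc
  have hc0 : 0 < c := div_pos hL hm0
  have hmc : (m:ℝ) * c = L := by rw [hc]; field_simp
  have hx0 : ∀ i, 0 < 1 + x i := fun i => by linarith [hx i]
  have h2 : (1 + c) ≠ 0 := by positivity
  have hm' : (m:ℝ) ≠ 0 := hm0.ne'
  have key : ∀ i, (x i)^2/(1+x i)
      = (x i * (1 - 1/(1+c)^2) + (-1 + 1/(1+c) + c/(1+c)^2))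
        + (x i - c)^2/((1+x i)*(1+c)^2) := by
    intro i
    have h1 := (hx0 i).ne'
    field_simp
    ring
  have hsum2 : ∑ i, (x i)^2/(1+x i)
      = L^2/(m+L) + ∑ i, (x i - c)^2/((1+x i)*(1+c)^2) := by
    rw [Finset.sum_congr rfl fun i _ => key i, Finset.sum_add_distrib]
    congr 1
    rw [Finset.sum_add_distrib, ← Finset.sum_mul, hsum, Finset.sum_const,
      Finset.card_univ, Fintype.card_fin, nsmul_eq_mul, ← hmc]
    have hd : (m:ℝ) + (m:ℝ)*c ≠ 0 := by positivity
    field_simp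
    ring
  rw [hsum2]
  constructor
  · intro h
    have hS : ∑ i, (x i - c)^2/((1+x i)*(1+c)^2) = 0 := by linarith
    have hnn : ∀ i ∈ Finset.univ, 0 ≤ (x i - c)^2/((1+x i)*(1+c)^2) := by
      intro i _
      have := hx0 i
      positivity
    intro i
    have h0 := (Finset.sum_eq_zero_iff_of_nonneg hnn).mp hS i (Finset.mem_univ i)
    have hd : ((1+x i)*(1+c)^2) ≠ 0 := by have := hx0 i; positivity
    have hnum : (x i - c)^2 = 0 := (div_eq_zero_iff.mp h0).resolve_right hd
    have hxc : x i = c := by nlinarith [hnum]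
    rw [hxc]
  · intro h
    have hz : ∑ i, (x i - c)^2/((1+x i)*(1+c)^2) = 0 :=
      Finset.sum_eq_zero fun i _ => by rw [h i]; simp
    rw [hz, add_zero]
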